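/- arXiv:math/0410557 — 2 statements merged into one kernel-verified Lean document; each statement's English description precedes it below -/
import Mathlib

section
/- Let Ω ⊆ ℝ² be open and let u : Ω → ℝ be a C³ solution of the two-dimensional minimal surface equation E(u) = 0 on Ω. Define v : Ω → ℝ by v(x,y) = x + u(x,y)·∂ₓu(x,y) (the symmetry φ̄₃¹ of Proposition 1). Then for every point (x,y) ∈ Ω, the function ε ↦ E(u + εv)(x,y) is differentiable at ε = 0 with derivative 0. -/
/-- Partial derivative in the `x` direction of a function on `ℝ²`. -/
noncomputable def px (f : ℝ × ℝ → ℝ) (z : ℝ × ℝ) : ℝ := fderiv ℝ f z (1, 0)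

/-- Partial derivative in the `y` direction of a function on `ℝ²`. -/
noncomputable def py (f : ℝ × ℝ → ℝ) (z : ℝ × ℝ) : ℝ := fderiv ℝ f z (0, 1)

open Filter Topology

section pd
variable {f g : ℝ × ℝ → ℝ} {z d : ℝ × ℝ} {c : ℝ}

private lemma pd_add (hf : DifferentiableAt ℝ f z) (hg : DifferentiableAt ℝ g z) :
    fderiv ℝ (fun w => f w + g w) z d = fderiv ℝ f z d + fderiv ℝ g z d := by
  rw [fderiv_fun_add hf hg]; rfl

private lemma pd_mul (hf : DifferentiableAt ℝ f z) (hg : DifferentiableAt ℝ g z) :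
    fderiv ℝ (fun w => f w * g w) z d
      = fderiv ℝ f z d * g z + f z * fderiv ℝ g z d := by
  rw [fderiv_fun_mul hf hg]
  simp [ContinuousLinearMap.add_apply, smul_eq_mul]
  ring

private lemma pd_const : fderiv ℝ (fun _ : ℝ × ℝ => c) z d = 0 := by
  simp [fderiv_const]

private lemma pd_const_mul (hf : DifferentiableAt ℝ f z) (c : ℝ) :
    fderiv ℝ (fun w => c * f w) z d = c * fderiv ℝ f z d := by
  rw [fderiv_const_mul hf c]; simp

private lemma pd_const_add (hf : DifferentiableAt ℝ f z) (c : ℝ) :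
    fderiv ℝ (fun w => c + f w) z d = fderiv ℝ f z d := by
  rw [fderiv_const_add]

private lemma pd_sub (hf : DifferentiableAt ℝ f z) (hg : DifferentiableAt ℝ g z) :
    fderiv ℝ (fun w => f w - g w) z d = fderiv ℝ f z d - fderiv ℝ g z d := by
  rw [fderiv_fun_sub hf hg]; rfl

private lemma pd_sq (hf : DifferentiableAt ℝ f z) :
    fderiv ℝ (fun w => f w ^ 2) z d = 2 * f z * fderiv ℝ f z d := by
  have h : (fun w => f w ^ 2) = fun w => f w * f w := by funext w; ring
  rw [h, pd_mul hf hf]; ring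

private lemma pd_fst : fderiv ℝ (fun w : ℝ × ℝ => w.1) z d = d.1 := by
  rw [show (fun w : ℝ × ℝ => w.1) = Prod.fst from rfl, fderiv_fst]; rfl

end pd

section pxpy
variable {f g : ℝ × ℝ → ℝ} {z : ℝ × ℝ} {c : ℝ}

lemma px_congr (h : f =ᶠ[𝓝 z] g) : px f z = px g z := by unfold px; rw [h.fderiv_eq]
lemma py_congr (h : f =ᶠ[𝓝 z] g) : py f z = py g z := by unfold py; rw [h.fderiv_eq]

lemma px_add (hf : DifferentiableAt ℝ f z) (hg : DifferentiableAt ℝ g z) :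
    px (fun w => f w + g w) z = px f z + px g z := pd_add hf hg
lemma py_add (hf : DifferentiableAt ℝ f z) (hg : DifferentiableAt ℝ g z) :
    py (fun w => f w + g w) z = py f z + py g z := pd_add hf hg
lemma px_mul (hf : DifferentiableAt ℝ f z) (hg : DifferentiableAt ℝ g z) :
    px (fun w => f w * g w) z = px f z * g z + f z * px g z := pd_mul hf hg
lemma py_mul (hf : DifferentiableAt ℝ f z) (hg : DifferentiableAt ℝ g z) :
    py (fun w => f w * g w) z = py f z * g z + f z * py g z := pd_mul hf hg
lemma px_const : px (fun _ => c) z = 0 := pd_const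
lemma py_const : py (fun _ => c) z = 0 := pd_const
lemma px_const_mul (hf : DifferentiableAt ℝ f z) (c : ℝ) :
    px (fun w => c * f w) z = c * px f z := pd_const_mul hf c
lemma py_const_mul (hf : DifferentiableAt ℝ f z) (c : ℝ) :
    py (fun w => c * f w) z = c * py f z := pd_const_mul hf c
lemma px_const_add (hf : DifferentiableAt ℝ f z) (c : ℝ) :
    px (fun w => c + f w) z = px f z := pd_const_add hf c
lemma py_const_add (hf : DifferentiableAt ℝ f z) (c : ℝ) :
    py (fun w => c + f w) z = py f z := pd_const_add hf c
lemma px_sub (hf : DifferentiableAt ℝ f z) (hg : DifferentiableAt ℝ g z) :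
    px (fun w => f w - g w) z = px f z - px g z := pd_sub hf hg
lemma py_sub (hf : DifferentiableAt ℝ f z) (hg : DifferentiableAt ℝ g z) :
    py (fun w => f w - g w) z = py f z - py g z := pd_sub hf hg
lemma px_sq (hf : DifferentiableAt ℝ f z) :
    px (fun w => f w ^ 2) z = 2 * f z * px f z := pd_sq hf
lemma py_sq (hf : DifferentiableAt ℝ f z) :
    py (fun w => f w ^ 2) z = 2 * f z * py f z := pd_sq hf
lemma px_fst : px (fun w : ℝ × ℝ => w.1) z = 1 := pd_fst
lemma py_fst : py (fun w : ℝ × ℝ => w.1) z = 0 := pd_fst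

lemma contDiffAt_px {m n : WithTop ℕ∞} (hf : ContDiffAt ℝ n f z) (hmn : m + 1 ≤ n) :
    ContDiffAt ℝ m (px f) z := by
  have h := hf.fderiv_right hmn
  exact (ContinuousLinearMap.apply ℝ ℝ ((1 : ℝ), (0 : ℝ))).contDiff.contDiffAt.comp z h

lemma contDiffAt_py {m n : WithTop ℕ∞} (hf : ContDiffAt ℝ n f z) (hmn : m + 1 ≤ n) :
    ContDiffAt ℝ m (py f) z := by
  have h := hf.fderiv_right hmn
  exact (ContinuousLinearMap.apply ℝ ℝ ((0 : ℝ), (1 : ℝ))).contDiff.contDiffAt.comp z h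

private lemma pd_fderiv_apply {v d : ℝ × ℝ} (hf : DifferentiableAt ℝ (fderiv ℝ f) z) :
    fderiv ℝ (fun w => fderiv ℝ f w v) z d = fderiv ℝ (fderiv ℝ f) z d v := by
  have h : HasFDerivAt (fun w => fderiv ℝ f w v)
      ((ContinuousLinearMap.apply ℝ ℝ v).comp (fderiv ℝ (fderiv ℝ f) z)) z :=
    (ContinuousLinearMap.apply ℝ ℝ v).hasFDerivAt.comp z hf.hasFDerivAt
  rw [h.fderiv]; rfl

lemma symm_mixed (hf : ContDiffAt ℝ 2 f z) : px (py f) z = py (px f) z := by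
  have hd : DifferentiableAt ℝ (fderiv ℝ f) z :=
    (hf.fderiv_right (m := 1) (by norm_num)).differentiableAt one_ne_zero
  have h1 : px (py f) z = fderiv ℝ (fderiv ℝ f) z (1, 0) (0, 1) := pd_fderiv_apply hd
  have h2 : py (px f) z = fderiv ℝ (fderiv ℝ f) z (0, 1) (1, 0) := pd_fderiv_apply hd
  rw [h1, h2, (hf.isSymmSndFDerivAt (by simp)).eq]

end pxpy


/-- The two-dimensional minimal surface operator
`E(w) = (1 + w_y²)·w_xx − 2·w_x·w_y·w_xy + (1 + w_x²)·w_yy`. -/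
noncomputable def msOp (w : ℝ × ℝ → ℝ) (z : ℝ × ℝ) : ℝ :=
  (1 + (py w z) ^ 2) * px (px w) z - 2 * px w z * py w z * py (px w) z
    + (1 + (px w z) ^ 2) * py (py w) z

/-- the symmetry section `x + u·u_x` -/
noncomputable def vAux (u : ℝ × ℝ → ℝ) : ℝ × ℝ → ℝ := fun w => w.1 + u w * px u w


/-- The section `φ̄₃¹ = x + u·u_x` is an infinitesimal symmetry of the
two-dimensional minimal surface equation at every `C³` solution `u`. -/
theorem phibar_is_infinitesimal_symmetry
    (Ω : Set (ℝ × ℝ)) (hΩ : IsOpen Ω) (u : ℝ × ℝ → ℝ)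
    (hu : ContDiffOn ℝ 3 u Ω) (hsol : ∀ z ∈ Ω, msOp u z = 0) :
    ∀ z ∈ Ω, HasDerivAt
      (fun ε : ℝ => msOp (fun w => u w + ε * (w.1 + u w * px u w)) z) 0 0 := by

  intro z hz
  have hmem : Ω ∈ 𝓝 z := hΩ.mem_nhds hz
  have hCD : ∀ w ∈ Ω, ContDiffAt ℝ 3 u w := fun w hw => hu.contDiffAt (hΩ.mem_nhds hw)
  set v : ℝ × ℝ → ℝ := vAux u with hvset
  have hvdef : v = fun w => w.1 + u w * px u w := rfl
  -- smoothness bookkeeping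
  have hux2 : ∀ w ∈ Ω, ContDiffAt ℝ 2 (px u) w := fun w hw =>
    contDiffAt_px (hCD w hw) (by norm_num)
  have huy2 : ∀ w ∈ Ω, ContDiffAt ℝ 2 (py u) w := fun w hw =>
    contDiffAt_py (hCD w hw) (by norm_num)
  have du : ∀ w ∈ Ω, DifferentiableAt ℝ u w := fun w hw =>
    (hCD w hw).differentiableAt (by norm_num)
  have dux : ∀ w ∈ Ω, DifferentiableAt ℝ (px u) w := fun w hw =>
    (hux2 w hw).differentiableAt (by norm_num)
  have duy : ∀ w ∈ Ω, DifferentiableAt ℝ (py u) w := fun w hw =>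
    (huy2 w hw).differentiableAt (by norm_num)
  have duxx : ∀ w ∈ Ω, DifferentiableAt ℝ (px (px u)) w := fun w hw =>
    (contDiffAt_px (m := 1) (hux2 w hw) (by norm_num)).differentiableAt one_ne_zero
  have duxy : ∀ w ∈ Ω, DifferentiableAt ℝ (py (px u)) w := fun w hw =>
    (contDiffAt_py (m := 1) (hux2 w hw) (by norm_num)).differentiableAt one_ne_zero
  have duyy : DifferentiableAt ℝ (py (py u)) z :=
    (contDiffAt_py (m := 1) (huy2 z hz) (by norm_num)).differentiableAt one_ne_zero
  have hv2 : ∀ w ∈ Ω, ContDiffAt ℝ 2 v w := fun w hw => by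
    rw [hvdef]
    exact contDiff_fst.contDiffAt.add (((hCD w hw).of_le (by norm_num)).mul (hux2 w hw))
  have dv : ∀ w ∈ Ω, DifferentiableAt ℝ v w := fun w hw =>
    (hv2 w hw).differentiableAt (by norm_num)
  have dvx : DifferentiableAt ℝ (px v) z :=
    (contDiffAt_px (m := 1) (hv2 z hz) (by norm_num)).differentiableAt one_ne_zero
  have dvy : DifferentiableAt ℝ (py v) z :=
    (contDiffAt_py (m := 1) (hv2 z hz) (by norm_num)).differentiableAt one_ne_zero
  -- first derivatives of v on Ω
  have fvx : ∀ w ∈ Ω, px v w = 1 + px u w * px u w + u w * px (px u) w := by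
    intro w hw
    rw [hvdef, px_add differentiableAt_fst ((du w hw).fun_mul (dux w hw)), px_fst,
      px_mul (du w hw) (dux w hw)]
    ring
  have fvy : ∀ w ∈ Ω, py v w = py u w * px u w + u w * py (px u) w := by
    intro w hw
    rw [hvdef, py_add differentiableAt_fst ((du w hw).fun_mul (dux w hw)), py_fst,
      py_mul (du w hw) (dux w hw)]
    ring
  -- second derivatives of v at z
  have g1 : px (px v) z = 3 * px u z * px (px u) z + u z * px (px (px u)) z := by
    rw [px_congr (Filter.eventually_of_mem hmem fvx),
      px_add (((dux z hz).fun_mul (dux z hz)).const_add 1) ((du z hz).fun_mul (duxx z hz)),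
      px_const_add ((dux z hz).fun_mul (dux z hz)) 1,
      px_mul (dux z hz) (dux z hz), px_mul (du z hz) (duxx z hz)]
    ring
  have g2 : py (px v) z = 2 * px u z * py (px u) z + py u z * px (px u) z
      + u z * py (px (px u)) z := by
    rw [py_congr (Filter.eventually_of_mem hmem fvx),
      py_add (((dux z hz).fun_mul (dux z hz)).const_add 1) ((du z hz).fun_mul (duxx z hz)),
      py_const_add ((dux z hz).fun_mul (dux z hz)) 1,
      py_mul (dux z hz) (dux z hz), py_mul (du z hz) (duxx z hz)]
    ring
  have g3 : py (py v) z = py (py u) z * px u z + 2 * py u z * py (px u) z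
      + u z * py (py (px u)) z := by
    rw [py_congr (Filter.eventually_of_mem hmem fvy),
      py_add ((duy z hz).fun_mul (dux z hz)) ((du z hz).fun_mul (duxy z hz)),
      py_mul (duy z hz) (dux z hz), py_mul (du z hz) (duxy z hz)]
    ring
  -- the equation and its x-derivative at z
  have hE : (1 + py u z ^ 2) * px (px u) z - 2 * px u z * py u z * py (px u) z
      + (1 + px u z ^ 2) * py (py u) z = 0 := hsol z hz
  have hms0 : px (msOp u) z = 0 := by
    have hev : msOp u =ᶠ[𝓝 z] fun _ => (0 : ℝ) := Filter.eventually_of_mem hmem hsol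
    rw [px_congr hev, px_const]
  have d1 : DifferentiableAt ℝ (fun w => 1 + py u w ^ 2) z := ((duy z hz).pow 2).const_add 1
  have d3 : DifferentiableAt ℝ (fun w => 1 + px u w ^ 2) z := ((dux z hz).pow 2).const_add 1
  have dT1 : DifferentiableAt ℝ (fun w => (1 + py u w ^ 2) * px (px u) w) z :=
    d1.mul (duxx z hz)
  have dT2 : DifferentiableAt ℝ (fun w => 2 * px u w * py u w * py (px u) w) z :=
    (((dux z hz).const_mul 2).mul (duy z hz)).mul (duxy z hz)
  have dT3 : DifferentiableAt ℝ (fun w => (1 + px u w ^ 2) * py (py u) w) z :=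
    d3.mul duyy
  have hcalc : px (msOp u) z =
      2 * py u z * px (py u) z * px (px u) z + (1 + py u z ^ 2) * px (px (px u)) z
      - (2 * px (px u) z * py u z * py (px u) z
        + 2 * px u z * px (py u) z * py (px u) z
        + 2 * px u z * py u z * px (py (px u)) z)
      + (2 * px u z * px (px u) z * py (py u) z
        + (1 + px u z ^ 2) * px (py (py u)) z) := by
    rw [show msOp u = fun w => (1 + py u w ^ 2) * px (px u) w
          - 2 * px u w * py u w * py (px u) w
          + (1 + px u w ^ 2) * py (py u) w from rfl,
      px_add (dT1.fun_sub dT2) dT3, px_sub dT1 dT2,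
      px_mul d1 (duxx z hz), px_const_add ((duy z hz).fun_pow 2) 1, px_sq (duy z hz),
      px_mul (((dux z hz).const_mul 2).fun_mul (duy z hz)) (duxy z hz),
      px_mul ((dux z hz).const_mul 2) (duy z hz), px_const_mul (dux z hz) 2,
      px_mul d3 duyy, px_const_add ((dux z hz).fun_pow 2) 1, px_sq (dux z hz)]
    ring
  have hEx : 2 * py u z * px (py u) z * px (px u) z + (1 + py u z ^ 2) * px (px (px u)) z
      - (2 * px (px u) z * py u z * py (px u) z
        + 2 * px u z * px (py u) z * py (px u) z
        + 2 * px u z * py u z * px (py (px u)) z)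
      + (2 * px u z * px (px u) z * py (py u) z
        + (1 + px u z ^ 2) * px (py (py u)) z) = 0 := by
    rw [← hcalc]; exact hms0
  -- Clairaut symmetry
  have hs1 : px (py u) z = py (px u) z := symm_mixed ((hCD z hz).of_le (by norm_num))
  have hs2 : px (py (px u)) z = py (px (px u)) z := symm_mixed (hux2 z hz)
  have hs3 : px (py (py u)) z = py (py (px u)) z := by
    rw [symm_mixed (huy2 z hz)]
    exact py_congr (Filter.eventually_of_mem hmem
      (fun w hw => symm_mixed ((hCD w hw).of_le (by norm_num))))
  rw [hs1, hs2, hs3] at hEx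
  -- the perturbed operator is polynomial in ε
  have hF : ∀ ε : ℝ, msOp (fun w => u w + ε * v w) z =
      (1 + (py u z + ε * py v z) ^ 2) * (px (px u) z + ε * px (px v) z)
      - 2 * (px u z + ε * px v z) * (py u z + ε * py v z)
        * (py (px u) z + ε * py (px v) z)
      + (1 + (px u z + ε * px v z) ^ 2) * (py (py u) z + ε * py (py v) z) := by
    intro ε
    have hevx : px (fun p => u p + ε * v p) =ᶠ[𝓝 z] fun p => px u p + ε * px v p :=
      Filter.eventually_of_mem hmem fun w hw => by
        rw [px_add (du w hw) ((dv w hw).const_mul ε), px_const_mul (dv w hw) ε]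
    have hevy : py (fun p => u p + ε * v p) =ᶠ[𝓝 z] fun p => py u p + ε * py v p :=
      Filter.eventually_of_mem hmem fun w hw => by
        rw [py_add (du w hw) ((dv w hw).const_mul ε), py_const_mul (dv w hw) ε]
    have e1 : px (fun w => u w + ε * v w) z = px u z + ε * px v z := by
      rw [px_add (du z hz) ((dv z hz).const_mul ε), px_const_mul (dv z hz) ε]
    have e2 : py (fun w => u w + ε * v w) z = py u z + ε * py v z := by
      rw [py_add (du z hz) ((dv z hz).const_mul ε), py_const_mul (dv z hz) ε]
    have e3 : px (px (fun w => u w + ε * v w)) z = px (px u) z + ε * px (px v) z := by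
      rw [px_congr hevx, px_add (dux z hz) (dvx.const_mul ε), px_const_mul dvx ε]
    have e4 : py (px (fun w => u w + ε * v w)) z = py (px u) z + ε * py (px v) z := by
      rw [py_congr hevx, py_add (dux z hz) (dvx.const_mul ε), py_const_mul dvx ε]
    have e5 : py (py (fun w => u w + ε * v w)) z = py (py u) z + ε * py (py v) z := by
      rw [py_congr hevy, py_add (duy z hz) (dvy.const_mul ε), py_const_mul dvy ε]
    simp only [msOp]
    rw [e1, e2, e3, e4, e5]
  -- assemble
  show HasDerivAt (fun ε : ℝ => msOp (fun w => u w + ε * v w) z) 0 0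
  rw [funext hF]
  have lin : ∀ c d : ℝ, HasDerivAt (fun ε : ℝ => c + ε * d) d 0 := fun c d => by
    simpa using ((hasDerivAt_id (0 : ℝ)).mul_const d).const_add c
  have H1 := (((lin (py u z) (py v z)).fun_pow 2).const_add 1).fun_mul
    (lin (px (px u) z) (px (px v) z))
  have H2 := ((((lin (px u z) (px v z)).const_mul 2).fun_mul
    (lin (py u z) (py v z))).fun_mul (lin (py (px u) z) (py (px v) z)))
  have H3 := (((lin (px u z) (px v z)).fun_pow 2).const_add 1).fun_mul
    (lin (py (py u) z) (py (py v) z))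
  have H := (H1.fun_sub H2).fun_add H3
  refine H.congr_deriv ?_
  rw [fvx z hz, fvy z hz, g1, g2, g3]
  push_cast
  linear_combination (3 * px u z) * hE + u z * hEx
end

section
/- Let n ≥ 1, let Ω ⊆ ℝⁿ be open, and let u : Ω → ℝ be a C² solution of the n-dimensional minimal surface equation (1 + |∇u|²)·Δu − Σ_{i,j} uᵢuⱼ·∂²u/∂xⁱ∂xʲ = 0 on Ω, where uᵢ = ∂u/∂xⁱ and W = √(1 + |∇u|²). Then for each index i, the continuity equation assigned to the translation symmetry φ₂ⁱ = uᵢ holds on Ω: ∂/∂xⁱ ( uᵢ²/W − W ) + Σ_{j ≠ i} ∂/∂xʲ ( uᵢ·uⱼ / W ) = 0. -/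
open Finset

/-- The partial derivative `∂f/∂xⁱ` of a function on `ℝⁿ`. -/
noncomputable def pd {n : ℕ} (f : EuclideanSpace ℝ (Fin n) → ℝ) (i : Fin n)
    (x : EuclideanSpace ℝ (Fin n)) : ℝ :=
  fderiv ℝ f x (EuclideanSpace.single i 1)

set_option maxHeartbeats 1000000 in
/-- The continuity equation assigned to the translation symmetry `φ₂ⁱ = uᵢ` for a
`C²` solution of the `n`-dimensional minimal surface equation:
`Dᵢ(uᵢ²/W − W) + Σ_{j ≠ i} Dⱼ(uᵢuⱼ/W) = 0`, where `W = √(1 + |∇u|²)`. -/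
theorem translation_conservation_law
    (n : ℕ) (hn : 1 ≤ n) (Ω : Set (EuclideanSpace ℝ (Fin n))) (hΩ : IsOpen Ω)
    (u : EuclideanSpace ℝ (Fin n) → ℝ) (hu : ContDiffOn ℝ 2 u Ω)
    (hsol : ∀ x ∈ Ω, (1 + ∑ j, (pd u j x) ^ 2) * (∑ i, pd (pd u i) i x)
        - ∑ i, ∑ j, pd u i x * pd u j x * pd (pd u i) j x = 0) :
    ∀ i : Fin n, ∀ x ∈ Ω,
      pd (fun y => (pd u i y) ^ 2 / Real.sqrt (1 + ∑ j, (pd u j y) ^ 2)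
            - Real.sqrt (1 + ∑ j, (pd u j y) ^ 2)) i x
        + ∑ j ∈ univ.erase i,
            pd (fun y => pd u i y * pd u j y / Real.sqrt (1 + ∑ k, (pd u k y) ^ 2)) j x
        = 0 := by
  intro i x hx
  classical
  have hcd : ContDiffAt ℝ 2 u x := hu.contDiffAt (hΩ.mem_nhds hx)
  set e : Fin n → EuclideanSpace ℝ (Fin n) := fun j => EuclideanSpace.single j 1 with he
  have hD2' : ContDiffAt ℝ 1 (fderiv ℝ u) x := hcd.fderiv_right (le_refl 2)
  have hD2 : HasFDerivAt (fderiv ℝ u) (fderiv ℝ (fderiv ℝ u) x) x :=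
    (hD2'.differentiableAt one_ne_zero).hasFDerivAt
  set D2 := fderiv ℝ (fderiv ℝ u) x with hD2def
  set a : Fin n → ℝ := fun j => pd u j x with ha
  set c : Fin n → Fin n → ℝ := fun k j => D2 (e k) (e j) with hc
  set L : Fin n → (EuclideanSpace ℝ (Fin n) →L[ℝ] ℝ) :=
    fun j => (ContinuousLinearMap.apply ℝ ℝ (e j)).comp D2 with hLdef
  have hL : ∀ j, HasFDerivAt (fun y => pd u j y) (L j) x := fun j => by
    simpa [pd, Function.comp_def, hLdef, he] using
      (ContinuousLinearMap.apply ℝ ℝ (e j)).hasFDerivAt.comp x hD2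
  have hLapp : ∀ j k, L j (e k) = c k j := fun j k => rfl
  have hsymm : ∀ k j, c k j = c j k := fun k j =>
    (hcd.isSymmSndFDerivAt (by simp [minSmoothness_of_isRCLikeNormedField])) (e k) (e j)
  have hpd2 : ∀ j k, pd (pd u j) k x = c k j := by
    intro j k
    show fderiv ℝ (pd u j) x _ = _
    rw [(hL j).fderiv]
    rfl
  -- positivity of the sum under the square root
  set s : ℝ := 1 + ∑ j, a j ^ 2 with hs
  have hspos : 0 < s := by positivity
  set W : ℝ := Real.sqrt s with hW
  have hWpos : 0 < W := Real.sqrt_pos.2 hspos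
  have hWne : W ≠ 0 := ne_of_gt hWpos
  have hW2 : W ^ 2 = s := Real.sq_sqrt hspos.le
  -- derivative of the sum S
  set S' : EuclideanSpace ℝ (Fin n) →L[ℝ] ℝ := ∑ j, ((2 * a j) • L j) with hS'def
  have hSd : HasFDerivAt (fun y => 1 + ∑ j, (pd u j y) ^ 2) S' x := by
    refine HasFDerivAt.const_add (f := fun y => ∑ j, (pd u j y) ^ 2) 1 ?_
    refine HasFDerivAt.fun_sum fun j _ => ?_
    have := (hL j).mul (hL j)
    convert this using 1
    · rfl
    · ext y; rw [Pi.mul_apply]; ring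
    · ext v; simp [two_mul]; ring
  have hSx : (1 + ∑ j, (pd u j x) ^ 2) = s := rfl
  have hSne : (1 + ∑ j, (pd u j x) ^ 2) ≠ 0 := by rw [hSx]; exact ne_of_gt hspos
  have hWd : HasFDerivAt (fun y => Real.sqrt (1 + ∑ j, (pd u j y) ^ 2))
      ((1 / (2 * W)) • S') x := hSd.sqrt hSne
  have hId : HasFDerivAt (fun y => (Real.sqrt (1 + ∑ j, (pd u j y) ^ 2))⁻¹)
      ((-(W ^ 2)⁻¹) • ((1 / (2 * W)) • S')) x := by
    have h := (hasDerivAt_inv (x := Real.sqrt (1 + ∑ j, (pd u j x) ^ 2)) (by rw [hSx]; exact hWne)).comp_hasFDerivAt x hWd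
    exact h
  -- value of S' at e r
  have hS'app : ∀ r, S' (e r) = ∑ k, 2 * a k * c r k := by
    intro r
    simp [hS'def, ContinuousLinearMap.sum_apply, hLapp, mul_assoc]
  -- the generic product term
  have hQ : ∀ j : Fin n,
      pd (fun y => pd u i y * pd u j y / Real.sqrt (1 + ∑ k, (pd u k y) ^ 2)) j x
      = (a i * c j j + a j * c i j) / W - a i * a j * (∑ k, a k * c j k) / W ^ 3 := by
    intro j
    have hF : HasFDerivAt
        (fun y => pd u i y * pd u j y / Real.sqrt (1 + ∑ k, (pd u k y) ^ 2))
        ((a i * a j) • ((-(W ^ 2)⁻¹) • ((1 / (2 * W)) • S'))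
          + (W)⁻¹ • ((a i) • L j + (a j) • L i)) x := by
      have h := ((hL i).mul (hL j)).mul hId
      simp only [div_eq_mul_inv]
      exact h
    show fderiv ℝ _ x (e j) = _
    rw [hF.fderiv]
    simp only [ContinuousLinearMap.add_apply, ContinuousLinearMap.smul_apply, hLapp, hS'app,
      smul_eq_mul]
    rw [hsymm j i]
    have hsum : ∑ k, 2 * a k * c j k = 2 * ∑ k, a k * c j k := by
      rw [Finset.mul_sum]
      exact Finset.sum_congr rfl fun k _ => by ring
    rw [hsum]
    field_simp
    ring
  -- the first term of the conservation law
  have hP : pd (fun y => (pd u i y) ^ 2 / Real.sqrt (1 + ∑ j, (pd u j y) ^ 2)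
      - Real.sqrt (1 + ∑ j, (pd u j y) ^ 2)) i x
      = ((a i * c i i + a i * c i i) / W - a i * a i * (∑ k, a k * c i k) / W ^ 3)
        - (∑ k, a k * c i k) / W := by
    have heq : (fun y => (pd u i y) ^ 2 / Real.sqrt (1 + ∑ j, (pd u j y) ^ 2)
        - Real.sqrt (1 + ∑ j, (pd u j y) ^ 2))
        = (fun y => pd u i y * pd u i y / Real.sqrt (1 + ∑ j, (pd u j y) ^ 2)
        - Real.sqrt (1 + ∑ j, (pd u j y) ^ 2)) := funext fun y => by rw [pow_two]
    rw [heq]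
    have hF : HasFDerivAt
        (fun y => pd u i y * pd u i y / Real.sqrt (1 + ∑ j, (pd u j y) ^ 2)
          - Real.sqrt (1 + ∑ j, (pd u j y) ^ 2))
        (((a i * a i) • ((-(W ^ 2)⁻¹) • ((1 / (2 * W)) • S'))
          + (W)⁻¹ • ((a i) • L i + (a i) • L i)) - (1 / (2 * W)) • S') x := by
      have hF0 : HasFDerivAt
          (fun y => pd u i y * pd u i y / Real.sqrt (1 + ∑ j, (pd u j y) ^ 2))
          ((a i * a i) • ((-(W ^ 2)⁻¹) • ((1 / (2 * W)) • S'))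
            + (W)⁻¹ • ((a i) • L i + (a i) • L i)) x := by
        have h := ((hL i).mul (hL i)).mul hId
        simp only [div_eq_mul_inv]
        exact h
      exact hF0.sub hWd
    show fderiv ℝ _ x (e i) = _
    rw [hF.fderiv]
    simp only [ContinuousLinearMap.sub_apply, ContinuousLinearMap.add_apply,
      ContinuousLinearMap.smul_apply, hLapp, hS'app, smul_eq_mul]
    have hsum : ∑ k, 2 * a k * c i k = 2 * ∑ k, a k * c i k := by
      rw [Finset.mul_sum]
      exact Finset.sum_congr rfl fun k _ => by ring
    rw [hsum]
    field_simp
    ring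
  rw [hP, Finset.sum_congr rfl (fun j _ => hQ j)]
  have hins := Finset.add_sum_erase univ
    (fun j => (a i * c j j + a j * c i j) / W - a i * a j * (∑ k, a k * c j k) / W ^ 3)
    (Finset.mem_univ i)
  rw [show ((a i * c i i + a i * c i i) / W - a i * a i * (∑ k, a k * c i k) / W ^ 3)
      - (∑ k, a k * c i k) / W
      + ∑ j ∈ univ.erase i, ((a i * c j j + a j * c i j) / W
          - a i * a j * (∑ k, a k * c j k) / W ^ 3)
    = (((a i * c i i + a i * c i i) / W - a i * a i * (∑ k, a k * c i k) / W ^ 3)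
      + ∑ j ∈ univ.erase i, ((a i * c j j + a j * c i j) / W
          - a i * a j * (∑ k, a k * c j k) / W ^ 3)) - (∑ k, a k * c i k) / W from by ring,
    hins]
  -- expand the full sum
  have h1 : ∑ j, ((a i * c j j + a j * c i j) / W - a i * a j * (∑ k, a k * c j k) / W ^ 3)
      = (a i * ∑ j, c j j + ∑ j, a j * c i j) / W
        - a i * (∑ j, a j * ∑ k, a k * c j k) / W ^ 3 := by
    rw [Finset.sum_sub_distrib, ← Finset.sum_div, Finset.sum_add_distrib, ← Finset.mul_sum]
    congr 1
    rw [Finset.mul_sum, ← Finset.sum_div]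
    congr 1
    exact Finset.sum_congr rfl fun j _ => by ring
  rw [h1]
  -- the minimal surface equation at x
  have hs0 := hsol x hx
  have e2 : (∑ p, pd (pd u p) p x) = ∑ p, c p p :=
    Finset.sum_congr rfl fun p _ => hpd2 p p
  have e3 : ∑ p, ∑ q, pd u p x * pd u q x * pd (pd u p) q x
      = ∑ j, a j * ∑ k, a k * c j k := by
    refine Finset.sum_congr rfl fun p _ => ?_
    rw [Finset.mul_sum]
    refine Finset.sum_congr rfl fun q _ => ?_
    rw [hpd2 p q, hsymm q p]
    exact mul_assoc _ _ _
  rw [e2, e3, show (1 + ∑ j, pd u j x ^ 2) = W ^ 2 from hW2.symm] at hs0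
  field_simp
  linear_combination (a i) * hs0
end
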